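/- If f : ℝⁿ → ℝ is strictly convex, differentiable, and 1-coercive, then for every y ∈ ℝⁿ the Fenchel conjugate satisfies f*(y) = ⟨y, (∇f)⁻¹(y)⟩ − f((∇f)⁻¹(y)). -/

import Mathlib

open Filter Set RealInnerProductSpace

noncomputable def fenchel {n : ℕ} (f : EuclideanSpace ℝ (Fin n) → ℝ)
    (y : EuclideanSpace ℝ (Fin n)) : ℝ :=
  sSup (Set.range fun x => ⟪y, x⟫ - f x)

def Coercive1 {n : ℕ} (f : EuclideanSpace ℝ (Fin n) → ℝ) : Prop :=
  Tendsto (fun x => f x / ‖x‖) (Filter.comap norm Filter.atTop) Filter.atTop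

/-- Gradient inequality for convex functions. -/
lemma convex_grad_ineq {E : Type*} [NormedAddCommGroup E] [InnerProductSpace ℝ E] [CompleteSpace E]
    {f : E → ℝ} (hf : ConvexOn ℝ Set.univ f) {x g : E}
    (hg : HasGradientAt f g x) (z : E) : f x + ⟪g, z - x⟫ ≤ f z := by
  rcases eq_or_ne z x with rfl | hzx
  · simp
  · set φ : ℝ → ℝ := f ∘ (AffineMap.lineMap x z) with hφdef
    have hφc : ConvexOn ℝ Set.univ φ := by
      have := hf.comp_affineMap (AffineMap.lineMap x z (k := ℝ))
      simpa using this
    have hline : HasDerivAt (AffineMap.lineMap x z : ℝ → E) (z - x) 0 :=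
      AffineMap.hasDerivAt_lineMap
    have hd : HasDerivAt φ (⟪g, z - x⟫) 0 := by
      have hg' : HasFDerivAt f ((InnerProductSpace.toDual ℝ E) g)
          ((AffineMap.lineMap x z : ℝ → E) 0) := by
        simpa [AffineMap.lineMap_apply] using hg.hasFDerivAt
      have := hg'.comp_hasDerivAt 0 hline
      simpa [hφdef, InnerProductSpace.toDual_apply_apply] using this
    have hs := hφc.le_slope_of_hasDerivAt (mem_univ (0 : ℝ)) (mem_univ 1) one_pos hd
    have hφ0 : φ 0 = f x := by simp [hφdef]
    have hφ1 : φ 1 = f z := by simp [hφdef]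
    rw [slope_def_field, hφ0, hφ1] at hs
    have : ⟪g, z - x⟫ ≤ f z - f x := by
      simpa using hs
    linarith

lemma grad_surj {n : ℕ} (f : EuclideanSpace ℝ (Fin n) → ℝ)
    (f' : EuclideanSpace ℝ (Fin n) → EuclideanSpace ℝ (Fin n))
    (hdiff : ∀ x, HasGradientAt f (f' x) x)
    (hcoer : Coercive1 f) (y : EuclideanSpace ℝ (Fin n)) : ∃ x, f' x = y := by
  set g : EuclideanSpace ℝ (Fin n) → ℝ := fun x => f x - ⟪y, x⟫ with hgdef
  have hfc : Continuous f :=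
    Differentiable.continuous (fun x => (hdiff x).differentiableAt)
  have hgc : Continuous g := hfc.sub (continuous_const.inner continuous_id)
  have hg_comap : Tendsto g (Filter.comap norm Filter.atTop) Filter.atTop := by
    rw [tendsto_atTop]
    intro b
    have h1 : ∀ᶠ x in Filter.comap norm Filter.atTop, ‖y‖ + 1 ≤ f x / ‖x‖ :=
      hcoer.eventually_ge_atTop (‖y‖ + 1)
    have h2 : ∀ᶠ (x : EuclideanSpace ℝ (Fin n)) in Filter.comap norm Filter.atTop,
        max b 1 ≤ ‖x‖ := tendsto_comap.eventually_ge_atTop (max b 1)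
    filter_upwards [h1, h2] with x hx1 hx2
    have hx0 : (0 : ℝ) < ‖x‖ := lt_of_lt_of_le (by positivity) hx2
    have hfx : (‖y‖ + 1) * ‖x‖ ≤ f x := by
      rw [le_div_iff₀ hx0] at hx1; linarith
    have hinner : ⟪y, x⟫ ≤ ‖y‖ * ‖x‖ := real_inner_le_norm y x
    have hb : b ≤ ‖x‖ := le_trans (le_max_left _ _) hx2
    simp only [hgdef]
    nlinarith
  have hcc : Tendsto g (cocompact _) Filter.atTop :=
    hg_comap.mono_left (tendsto_iff_comap.mp (tendsto_norm_cocompact_atTop (E := EuclideanSpace ℝ (Fin n))))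
  obtain ⟨x₀, hx₀⟩ := hgc.exists_forall_le hcc
  have hgrad : HasGradientAt g (f' x₀ - y) x₀ := by
    have h1 := (hdiff x₀).hasFDerivAt
    have h2 : HasFDerivAt (fun x : EuclideanSpace ℝ (Fin n) => ⟪y, x⟫)
        (InnerProductSpace.toDual ℝ _ y : _ →L[ℝ] ℝ) x₀ :=
      (InnerProductSpace.toDual ℝ _ y).hasFDerivAt
    have := h1.sub h2
    rw [hasGradientAt_iff_hasFDerivAt]
    rw [map_sub]; exact this
  have hloc : IsLocalMin g x₀ := Filter.Eventually.of_forall hx₀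
  have hzero := hloc.hasFDerivAt_eq_zero hgrad.hasFDerivAt
  have : f' x₀ - y = 0 := by
    have := congrArg (InnerProductSpace.toDual ℝ _).symm hzero
    simpa using this
  exact ⟨x₀, by rwa [sub_eq_zero] at this⟩

theorem stmt4 {n : ℕ} (f : EuclideanSpace ℝ (Fin n) → ℝ)
    (f' : EuclideanSpace ℝ (Fin n) → EuclideanSpace ℝ (Fin n))
    (hsc : StrictConvexOn ℝ Set.univ f) (hdiff : ∀ x, HasGradientAt f (f' x) x)
    (hcoer : Coercive1 f) :
    ∀ y, fenchel f y = ⟪y, Function.invFun f' y⟫ - f (Function.invFun f' y) := by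
  intro y
  have hcv : ConvexOn ℝ Set.univ f := hsc.convexOn
  set x₀ := Function.invFun f' y with hx₀def
  have hx₀ : f' x₀ = y := Function.invFun_eq (grad_surj f f' hdiff hcoer y)
  have hub : ∀ z, ⟪y, z⟫ - f z ≤ ⟪y, x₀⟫ - f x₀ := by
    intro z
    have := convex_grad_ineq hcv (hdiff x₀) z
    rw [hx₀, inner_sub_right] at this
    linarith
  have hgr : IsGreatest (Set.range fun x => ⟪y, x⟫ - f x) (⟪y, x₀⟫ - f x₀) :=
    ⟨⟨x₀, rfl⟩, by rintro _ ⟨z, rfl⟩; exact hub z⟩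
  exact hgr.csSup_eq
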